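/- Let D ⊆ ℝ^d be a measurable set and let q: (0,∞) × D × D → [0,∞) be a measurable kernel satisfying: q_t(x,y) = q_t(y,x) for all t > 0 and x, y ∈ D; the Chapman–Kolmogorov equation q_{s+t}(x,y) = ∫_D q_s(x,z) q_t(z,y) dz for all s, t > 0; the sub-Markov property ∫_D q_t(x,z) dz ≤ 1 for all t > 0 and x ∈ D; and sup_{x,y ∈ D} q_t(x,y) ≤ C₁ for every t ≥ 1/2. Set E(x) = ∫_0^∞ ∫_D q_t(x,z) dz dt. Then there exists a constant C depending only on C₁ such that q_t(x,y) ≤ C E(x) E(y) / t² for all t ≥ 1 and all x, y ∈ D. -/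

import Mathlib

open MeasureTheory

/-- Upper bound for a symmetric sub-Markov kernel: if `q` is symmetric on `D`,
satisfies the Chapman–Kolmogorov equation and the sub-Markov property on `D`, and
`q_t(x,y) ≤ C₁` for `t ≥ 1/2`, then with `E(x) = ∫_0^∞ ∫_D q_t(x,z) dz dt` there is a
constant `C` depending only on `C₁` such that `q_t(x,y) ≤ C E(x) E(y) / t²` for
`t ≥ 1` and `x, y ∈ D`. -/
theorem killed_density_bound (d : ℕ) (C₁ : ℝ) (hC₁ : 0 < C₁) :
    ∃ C : ℝ, 0 < C ∧
      ∀ (D : Set (EuclideanSpace ℝ (Fin d))), MeasurableSet D →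
      ∀ q : ℝ → EuclideanSpace ℝ (Fin d) → EuclideanSpace ℝ (Fin d) → ENNReal,
        Measurable (fun tp : ℝ × EuclideanSpace ℝ (Fin d) × EuclideanSpace ℝ (Fin d) =>
          q tp.1 tp.2.1 tp.2.2) →
        (∀ t > (0 : ℝ), ∀ x ∈ D, ∀ y ∈ D, q t x y = q t y x) →
        (∀ s > (0 : ℝ), ∀ t > (0 : ℝ), ∀ x ∈ D, ∀ y ∈ D,
          q (s + t) x y = ∫⁻ z in D, q s x z * q t z y) →
        (∀ t > (0 : ℝ), ∀ x ∈ D, (∫⁻ z in D, q t x z) ≤ 1) →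
        (∀ t ≥ (1 : ℝ) / 2, ∀ x ∈ D, ∀ y ∈ D, q t x y ≤ ENNReal.ofReal C₁) →
        ∀ t ≥ (1 : ℝ), ∀ x ∈ D, ∀ y ∈ D,
          q t x y ≤ ENNReal.ofReal C *
            ((∫⁻ s in Set.Ioi (0 : ℝ), ∫⁻ z in D, q s x z) *
              (∫⁻ s in Set.Ioi (0 : ℝ), ∫⁻ z in D, q s y z)) /
            ENNReal.ofReal (t ^ 2) := by
  refine ⟨16 * C₁, by positivity, ?_⟩
  intro D hD q hq hsym hck hsub hbd t ht x hx y hy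
  set F : EuclideanSpace ℝ (Fin d) → ℝ → ENNReal :=
    fun x s => ∫⁻ z in D, q s x z with hF
  -- monotonicity of survival probability
  have hFmono : ∀ x ∈ D, ∀ a > (0:ℝ), ∀ b, a ≤ b → F x b ≤ F x a := by
    intro x hx a ha b hab
    rcases eq_or_lt_of_le hab with h | h
    · rw [h]
    · have hs : 0 < b - a := sub_pos.2 h
      have hmeas : Measurable fun p : EuclideanSpace ℝ (Fin d) × EuclideanSpace ℝ (Fin d) =>
          q a x p.2 * q (b - a) p.2 p.1 := by
        exact (hq.comp (measurable_const.prodMk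
            (measurable_const.prodMk measurable_snd))).mul
          (hq.comp (measurable_const.prodMk (measurable_snd.prodMk measurable_fst)))
      calc F x b = ∫⁻ z in D, q (a + (b - a)) x z := by
            simp only [hF]; norm_num
        _ = ∫⁻ z in D, ∫⁻ w in D, q a x w * q (b - a) w z := by
            refine setLIntegral_congr_fun hD (fun z hz => ?_)
            exact hck a ha (b - a) hs x hx z hz
        _ = ∫⁻ w in D, ∫⁻ z in D, q a x w * q (b - a) w z :=
            lintegral_lintegral_swap hmeas.aemeasurable
        _ = ∫⁻ w in D, q a x w * ∫⁻ z in D, q (b - a) w z := by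
            refine setLIntegral_congr_fun hD (fun w hw => ?_)
            exact lintegral_const_mul (q a x w)
              (hq.comp (measurable_const.prodMk
                (measurable_const.prodMk measurable_id)))
        _ ≤ ∫⁻ w in D, q a x w * 1 :=
            setLIntegral_mono' hD fun w hw => mul_le_mul_right (hsub (b - a) hs w hw) _
        _ = F x a := by simp [hF]
  -- E x bounds a * F x a
  have hEbound : ∀ x ∈ D, ∀ a > (0:ℝ),
      ENNReal.ofReal a * F x a ≤ ∫⁻ s in Set.Ioi (0:ℝ), F x s := by
    intro x hx a ha
    calc ENNReal.ofReal a * F x a = ∫⁻ _ in Set.Ioc (0:ℝ) a, F x a := by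
          rw [setLIntegral_const, Real.volume_Ioc, sub_zero, mul_comm]
      _ ≤ ∫⁻ s in Set.Ioc (0:ℝ) a, F x s :=
          setLIntegral_mono' measurableSet_Ioc fun s hs => hFmono x hx s hs.1 a hs.2
      _ ≤ ∫⁻ s in Set.Ioi (0:ℝ), F x s :=
          lintegral_mono_set Set.Ioc_subset_Ioi_self
  set a : ℝ := (t - 1/2)/2 with haDef
  have ha : 0 < a := by simp only [haDef]; linarith
  have ha4 : t ≤ 4 * a := by simp only [haDef]; linarith
  have hhalf : (0:ℝ) < 1/2 + a := by linarith
  have hFfin : ∀ w ∈ D, F w a ≤ 1 := fun w hw => hsub a ha w hw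
  have hstep : ∀ z ∈ D, q (1/2 + a) z y ≤ ENNReal.ofReal C₁ * F y a := by
    intro z hz
    rw [hck (1/2) one_half_pos a ha z hz y hy]
    calc ∫⁻ w in D, q (1/2) z w * q a w y
        ≤ ∫⁻ w in D, ENNReal.ofReal C₁ * q a w y :=
          setLIntegral_mono' hD fun w hw =>
            mul_le_mul_left (hbd (1/2) le_rfl z hz w hw) _
      _ = ENNReal.ofReal C₁ * ∫⁻ w in D, q a w y :=
          lintegral_const_mul _ (hq.comp (measurable_const.prodMk
            (measurable_id.prodMk measurable_const)))
      _ = ENNReal.ofReal C₁ * F y a := by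
          congr 1
          exact setLIntegral_congr_fun hD (fun w hw => hsym a ha w hw y hy)
  have hmain : q t x y ≤ ENNReal.ofReal C₁ * (F x a * F y a) := by
    have hteq : t = a + (1/2 + a) := by simp only [haDef]; ring
    calc q t x y = ∫⁻ z in D, q a x z * q (1/2 + a) z y := by
          rw [hteq]; exact hck a ha (1/2 + a) hhalf x hx y hy
      _ ≤ ∫⁻ z in D, q a x z * (ENNReal.ofReal C₁ * F y a) :=
          setLIntegral_mono' hD fun z hz => mul_le_mul_right (hstep z hz) _
      _ = F x a * (ENNReal.ofReal C₁ * F y a) :=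
          lintegral_mul_const' _ _ (by
            exact ENNReal.mul_ne_top ENNReal.ofReal_ne_top
              ((lt_of_le_of_lt (hFfin y hy) ENNReal.one_lt_top).ne))
      _ = ENNReal.ofReal C₁ * (F x a * F y a) := by ring
  have ht0 : (0:ℝ) < t := lt_of_lt_of_le one_pos ht
  rw [ENNReal.le_div_iff_mul_le (Or.inl (by simp [ht0, ht0.ne', pow_pos]))
    (Or.inl ENNReal.ofReal_ne_top)]
  have hsq : t ^ 2 ≤ 16 * (a * a) := by nlinarith
  calc q t x y * ENNReal.ofReal (t ^ 2)
      ≤ (ENNReal.ofReal C₁ * (F x a * F y a)) * ENNReal.ofReal (16 * (a * a)) :=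
        mul_le_mul' hmain (ENNReal.ofReal_le_ofReal hsq)
    _ = ENNReal.ofReal (16 * C₁) *
        ((ENNReal.ofReal a * F x a) * (ENNReal.ofReal a * F y a)) := by
        rw [show (16 : ℝ) * (a * a) = 16 * a * a by ring,
          ENNReal.ofReal_mul (by positivity : (0:ℝ) ≤ 16 * a),
          ENNReal.ofReal_mul (by norm_num : (0:ℝ) ≤ 16),
          ENNReal.ofReal_mul (by norm_num : (0:ℝ) ≤ 16)]
        ring
    _ ≤ ENNReal.ofReal (16 * C₁) *
        ((∫⁻ s in Set.Ioi (0:ℝ), F x s) * (∫⁻ s in Set.Ioi (0:ℝ), F y s)) :=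
        mul_le_mul_right (mul_le_mul' (hEbound x hx a ha) (hEbound y hy a ha)) _
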